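/- (The paper's truthfulness-dominance theorem.) Let r : Fin M → ℝ be a human's reward function with 0 ≤ r(a) ≤ 1 for all a, let r* = max_a r(a), assume there is at least one suboptimal arm, and let Δ = min{r* − r(a) : r(a) < r*} > 0 be the minimal suboptimality gap. Fix γ ∈ (0,1) and an exploration length T with T·(1−γ)·Δ > r*. Then for every demonstration sequence a : Fin T → Fin M whose fraction of optimal pulls is below γ, i.e., |{t : r(a(t)) = r*}| < γ·T, it holds that Σ_{t < T} r(a(t)) + r* < T·r*. In particular, since the exploitation phase consists of a single robot pull with reward in [0, r*] and a truthful sequence (all pulls optimal) earns at least T·r* from the exploration phase alone, any strategy with truthfulness γ_h < γ is strictly dominated by a truthful strategy. -/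

import Mathlib

open Finset

/-- Truthfulness-dominance theorem: with rewards in [0,1], minimal
suboptimality gap Δ, and exploration length T satisfying `T·(1−γ)·Δ > r*`,
any demonstration sequence whose fraction of optimal pulls is below γ earns
strictly less, even after adding the best possible exploitation reward `r*`,
than `T·r*` — the amount a truthful sequence earns from exploration alone.
Hence any strategy with truthfulness below γ is strictly dominated by a
truthful one. -/
theorem untruthful_strategy_strictly_dominated
    (M : ℕ) (r : Fin M → ℝ) (h01 : ∀ a, 0 ≤ r a ∧ r a ≤ 1)
    (rstar : ℝ) (hstar : IsGreatest (Set.range r) rstar)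
    (hsub : ∃ a, r a < rstar)
    (Δ : ℝ) (hΔ : IsLeast {d : ℝ | ∃ a, r a < rstar ∧ d = rstar - r a} Δ)
    (hΔpos : 0 < Δ)
    (γ : ℝ) (hγ0 : 0 < γ) (hγ1 : γ < 1)
    (T : ℕ) (hT : (T : ℝ) * (1 - γ) * Δ > rstar)
    (a : Fin T → Fin M)
    (huntruth :
      ((({t : Fin T | r (a t) = rstar} : Finset (Fin T)).card : ℝ) < γ * T)) :
    (∑ t : Fin T, r (a t)) + rstar < (T : ℝ) * rstar := by
  set S : Finset (Fin T) := {t : Fin T | r (a t) = rstar} with hS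
  have hle : ∀ t, r (a t) ≤ rstar := fun t => hstar.2 ⟨a t, rfl⟩
  have hsplit : (∑ t : Fin T, r (a t)) =
      (∑ t ∈ S, r (a t)) + ∑ t ∈ Sᶜ, r (a t) :=
    (Finset.sum_add_sum_compl S _).symm
  have h1 : (∑ t ∈ S, r (a t)) = (S.card : ℝ) * rstar := by
    rw [Finset.sum_congr rfl (fun t ht => by
      simpa [hS, Finset.mem_filter] using ht)]
    simp [mul_comm]
  have h2 : (∑ t ∈ Sᶜ, r (a t)) ≤ (Sᶜ.card : ℝ) * (rstar - Δ) := by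
    calc (∑ t ∈ Sᶜ, r (a t)) ≤ ∑ _t ∈ Sᶜ, (rstar - Δ) := by
          apply Finset.sum_le_sum
          intro t ht
          have hne : r (a t) ≠ rstar := by
            simpa [hS, Finset.mem_filter] using (Finset.mem_compl.mp ht)
          have hlt : r (a t) < rstar := lt_of_le_of_ne (hle t) hne
          have : Δ ≤ rstar - r (a t) := hΔ.2 ⟨a t, hlt, rfl⟩
          linarith
      _ = (Sᶜ.card : ℝ) * (rstar - Δ) := by
          simp [Finset.sum_const, nsmul_eq_mul]
          ring
  have hcardle : S.card ≤ T := by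
    simpa using Finset.card_le_card (Finset.subset_univ S)
  have hcompl : ((Sᶜ.card : ℝ)) = (T : ℝ) - (S.card : ℝ) := by
    have := Finset.card_compl S
    rw [this]
    simp [Nat.cast_sub hcardle]
  rw [hsplit, h1]
  rw [hcompl] at h2
  nlinarith [h2, huntruth, hΔpos.le]
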